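/- (Foster's criterion.) Let (W_n) be a time-homogeneous Markov chain with Markov transition kernel K on a measurable space (W, B_W). Let L : W → [0,∞) be measurable, let L̂ ≥ 0, and set V := {w ∈ W : L(w) ≤ L̂}. Assume (i) sup_{w∈V} E[L(W_1) | W_0 = w] < ∞, and (ii) there exists ε > 0 such that E[L(W_1) | W_0 = w] − L(w) ≤ −ε for every w ∈ W \ V. Then V is positive recurrent: τ_w(V) := min{n ≥ 1 : W_n ∈ V} is almost surely finite for every initial state w ∈ W, and sup_{w∈V} E[τ_w(V)] < ∞. -/

import Mathlib

open MeasureTheory ProbabilityTheory Filter Set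
open scoped ENNReal

/-- The `n`-fold composition of a kernel with itself (`n = 0` gives the identity kernel). -/
noncomputable def kernelPow {W : Type*} [MeasurableSpace W] (Q : ProbabilityTheory.Kernel W W) :
    ℕ → ProbabilityTheory.Kernel W W
  | 0 => ProbabilityTheory.Kernel.id
  | n + 1 => Q ∘ₖ kernelPow Q n

/-- For a Markov chain with transition kernel `K` started at `w`, and a measurable set `V`,
the probability that the hitting time `τ_w(V) = min {n ≥ 1 : W_n ∈ V}` exceeds `n` equals
`Q^n(w, univ)` where `Q` is the restriction of `K` to the complement of `V` (the taboo kernel). -/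
noncomputable def probHitGT {W : Type*} [MeasurableSpace W] (K : ProbabilityTheory.Kernel W W)
    {V : Set W} (hV : MeasurableSet V) (w : W) (n : ℕ) : ℝ≥0∞ :=
  kernelPow (K.restrict hV.compl) n w Set.univ

/-- A measurable set `V` is positive recurrent for the kernel `K` if the hitting time
`τ_w(V)` is a.s. finite for every starting point `w` (i.e. `P_w(τ_w(V) > n) → 0`), and
`sup_{w ∈ V} E[τ_w(V)] < ∞`, where `E[τ_w(V)] = ∑_{n ≥ 0} P_w(τ_w(V) > n)`. -/
def PositiveRecurrent {W : Type*} [MeasurableSpace W] (K : ProbabilityTheory.Kernel W W)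
    {V : Set W} (hV : MeasurableSet V) : Prop :=
  (∀ w : W, Tendsto (fun n => probHitGT K hV w n) atTop (nhds 0)) ∧
    (⨆ w ∈ V, ∑' n : ℕ, probHitGT K hV w n) < ⊤

lemma kernelPow_isFiniteKernel {W : Type*} [MeasurableSpace W]
    (Q : ProbabilityTheory.Kernel W W) [ProbabilityTheory.IsFiniteKernel Q] :
    ∀ n, ProbabilityTheory.IsFiniteKernel (kernelPow Q n)
  | 0 => by rw [kernelPow]; infer_instance
  | (n + 1) => by rw [kernelPow]; have := kernelPow_isFiniteKernel Q n; infer_instance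

set_option maxHeartbeats 1000000 in
/-- **Foster's criterion.** Let `(W_n)` be a time-homogeneous Markov chain with Markov
transition kernel `K` on a measurable space `W`. Let `L : W → [0,∞)` be measurable, `L̂ ≥ 0`,
and `V = {w : L w ≤ L̂}`. If (i) `sup_{w ∈ V} E[L(W_1) | W_0 = w] < ∞` and (ii) there is
`ε > 0` with `E[L(W_1) | W_0 = w] ≤ L(w) - ε` for every `w ∉ V`, then `V` is positive
recurrent: `τ_w(V)` is a.s. finite for every `w`, and `sup_{w ∈ V} E[τ_w(V)] < ∞`. -/
theorem foster_criterion
    {W : Type*} [MeasurableSpace W] (K : ProbabilityTheory.Kernel W W) [IsMarkovKernel K]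
    (L : W → ℝ) (hL : Measurable L) (hLpos : ∀ w, 0 ≤ L w)
    (Lhat : ℝ) (hLhat : 0 ≤ Lhat)
    (V : Set W) (hVdef : V = {w : W | L w ≤ Lhat})
    (hV : MeasurableSet V)
    (hi : (⨆ w ∈ V, ∫⁻ z, ENNReal.ofReal (L z) ∂(K w)) < ⊤)
    (hii : ∃ ε : ℝ, 0 < ε ∧ ∀ w ∉ V,
      (∫⁻ z, ENNReal.ofReal (L z) ∂(K w)) + ENNReal.ofReal ε ≤ ENNReal.ofReal (L w)) :
    PositiveRecurrent K hV := by
  obtain ⟨ε, hε, hdrift⟩ := hii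
  set f : W → ℝ≥0∞ := fun z => ENNReal.ofReal (L z) with hfdef
  have hfm : Measurable f := hL.ennreal_ofReal
  set Q : ProbabilityTheory.Kernel W W := K.restrict hV.compl with hQdef
  haveI hfin : ∀ n, ProbabilityTheory.IsFiniteKernel (kernelPow Q n) :=
    kernelPow_isFiniteKernel Q
  have hεne : ENNReal.ofReal ε ≠ 0 := by
    simp [ENNReal.ofReal_eq_zero, not_le, hε]
  -- basic facts about Q
  have hQuniv : ∀ z, Q z Set.univ ≤ 1 := by
    intro z
    rw [hQdef, ProbabilityTheory.Kernel.restrict_apply, Measure.restrict_apply_univ]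
    exact prob_le_one
  have hQint : ∀ z, ∫⁻ x, f x ∂(Q z) ≤ ∫⁻ x, f x ∂(K z) := by
    intro z
    rw [hQdef, ProbabilityTheory.Kernel.lintegral_restrict]
    exact setLIntegral_le_lintegral _ _
  -- one-step drift estimate outside V
  have hstep1 : ∀ z ∉ V, (∫⁻ x, f x ∂(Q z)) + ENNReal.ofReal ε * Q z Set.univ ≤ f z := by
    intro z hz
    calc (∫⁻ x, f x ∂(Q z)) + ENNReal.ofReal ε * Q z Set.univ
        ≤ (∫⁻ x, f x ∂(K z)) + ENNReal.ofReal ε * 1 :=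
          add_le_add (hQint z) (mul_le_mul_right (hQuniv z) _)
      _ = (∫⁻ x, f x ∂(K z)) + ENNReal.ofReal ε := by rw [mul_one]
      _ ≤ f z := hdrift z hz
  -- Q z gives no mass to V
  have hQV : ∀ z, Q z V = 0 := by
    intro z
    rw [hQdef, ProbabilityTheory.Kernel.restrict_apply' _ _ _ hV]
    simp
  have hconc : ∀ n w, kernelPow Q (n + 1) w V = 0 := by
    intro n w
    rw [show kernelPow Q (n + 1) = Q ∘ₖ kernelPow Q n from rfl,
      ProbabilityTheory.Kernel.comp_apply' _ _ _ hV]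
    simp [hQV]
  -- the drift step for iterates
  have hstep : ∀ n w, (∫⁻ x, f x ∂(kernelPow Q (n + 2) w))
      + ENNReal.ofReal ε * kernelPow Q (n + 2) w Set.univ
      ≤ ∫⁻ x, f x ∂(kernelPow Q (n + 1) w) := by
    intro n w
    have hmeas1 : Measurable fun z => ∫⁻ x, f x ∂(Q z) := Measurable.lintegral_kernel hfm
    have hmeas2 : Measurable fun z => Q z Set.univ :=
      ProbabilityTheory.Kernel.measurable_coe Q MeasurableSet.univ
    rw [show kernelPow Q (n + 2) = Q ∘ₖ kernelPow Q (n + 1) from rfl,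
      ProbabilityTheory.Kernel.lintegral_comp _ _ _ hfm,
      ProbabilityTheory.Kernel.comp_apply' _ _ _ MeasurableSet.univ,
      ← lintegral_const_mul _ hmeas2, ← lintegral_add_left hmeas1]
    refine lintegral_mono_ae ?_
    have hae : ∀ᵐ z ∂(kernelPow Q (n + 1) w), z ∉ V := by
      rw [ae_iff]
      simpa using hconc n w
    filter_upwards [hae] with z hz using hstep1 z hz
  -- telescoping
  have tele : ∀ w N, (∑ k ∈ Finset.range N, ENNReal.ofReal ε * kernelPow Q (k + 2) w Set.univ)
      + ∫⁻ x, f x ∂(kernelPow Q (N + 1) w) ≤ ∫⁻ x, f x ∂(kernelPow Q 1 w) := by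
    intro w N
    induction N with
    | zero => simp
    | succ N ih =>
      rw [Finset.sum_range_succ]
      calc (∑ k ∈ Finset.range N, ENNReal.ofReal ε * kernelPow Q (k + 2) w Set.univ)
            + ENNReal.ofReal ε * kernelPow Q (N + 2) w Set.univ
            + ∫⁻ x, f x ∂(kernelPow Q (N + 2) w)
          = (∑ k ∈ Finset.range N, ENNReal.ofReal ε * kernelPow Q (k + 2) w Set.univ)
            + ((∫⁻ x, f x ∂(kernelPow Q (N + 2) w))
              + ENNReal.ofReal ε * kernelPow Q (N + 2) w Set.univ) := by ring
        _ ≤ (∑ k ∈ Finset.range N, ENNReal.ofReal ε * kernelPow Q (k + 2) w Set.univ)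
            + ∫⁻ x, f x ∂(kernelPow Q (N + 1) w) := add_le_add_right (hstep N w) _
        _ ≤ _ := ih
  have hpow1 : ∀ w, kernelPow Q 1 w = Q w := by
    intro w
    rw [show kernelPow Q 1 = Q ∘ₖ kernelPow Q 0 from rfl,
      show kernelPow Q 0 = ProbabilityTheory.Kernel.id from rfl,
      ProbabilityTheory.Kernel.comp_id]
  -- tail sum bound
  have htail : ∀ w, ENNReal.ofReal ε * (∑' k : ℕ, kernelPow Q (k + 2) w Set.univ)
      ≤ ∫⁻ x, f x ∂(Q w) := by
    intro w
    rw [← ENNReal.tsum_mul_left]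
    refine ENNReal.tsum_le_of_sum_range_le ?_
    intro N
    calc (∑ k ∈ Finset.range N, ENNReal.ofReal ε * kernelPow Q (k + 2) w Set.univ)
        ≤ (∑ k ∈ Finset.range N, ENNReal.ofReal ε * kernelPow Q (k + 2) w Set.univ)
          + ∫⁻ x, f x ∂(kernelPow Q (N + 1) w) := le_self_add
      _ ≤ ∫⁻ x, f x ∂(kernelPow Q 1 w) := tele w N
      _ = ∫⁻ x, f x ∂(Q w) := by rw [hpow1]
  -- finiteness of ∫ f dQ w for every w
  have hQfin : ∀ w, ∫⁻ x, f x ∂(Q w) < ⊤ := by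
    intro w
    by_cases hw : w ∈ V
    · refine lt_of_le_of_lt ((hQint w).trans ?_) hi
      exact le_biSup (fun w => ∫⁻ z, ENNReal.ofReal (L z) ∂(K w)) hw
    · refine lt_of_le_of_lt ((hQint w).trans ?_) (show ENNReal.ofReal (L w) < ⊤ from ENNReal.ofReal_lt_top)
      exact le_self_add.trans (hdrift w hw)
  -- total sum bound
  have hsum : ∀ w, (∑' n : ℕ, probHitGT K hV w n)
      ≤ 2 + (∫⁻ x, f x ∂(Q w)) / ENNReal.ofReal ε := by
    intro w
    have h0 : probHitGT K hV w 0 = 1 := by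
      simp [probHitGT, kernelPow, ProbabilityTheory.Kernel.id_apply]
    have h1 : probHitGT K hV w 1 ≤ 1 := by
      have : probHitGT K hV w 1 = Q w Set.univ := by
        simp only [probHitGT, ← hQdef, hpow1]
      rw [this]; exact hQuniv w
    have htailw : (∑' k : ℕ, probHitGT K hV w (k + 2))
        ≤ (∫⁻ x, f x ∂(Q w)) / ENNReal.ofReal ε := by
      rw [ENNReal.le_div_iff_mul_le (Or.inl hεne) (Or.inl ENNReal.ofReal_ne_top), mul_comm]
      exact htail w
    calc (∑' n : ℕ, probHitGT K hV w n)
        = probHitGT K hV w 0 + (probHitGT K hV w 1 + ∑' k : ℕ, probHitGT K hV w (k + 2)) := by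
          rw [tsum_eq_zero_add' ENNReal.summable, tsum_eq_zero_add' ENNReal.summable]
      _ ≤ 1 + (1 + (∫⁻ x, f x ∂(Q w)) / ENNReal.ofReal ε) := by
          rw [h0]; exact add_le_add_right (add_le_add h1 htailw) _
      _ = 2 + (∫⁻ x, f x ∂(Q w)) / ENNReal.ofReal ε := by ring
  constructor
  · -- a.s. finiteness: terms of a finite sum tend to zero
    intro w
    refine ENNReal.tendsto_atTop_zero_of_tsum_ne_top ?_
    refine ne_of_lt (lt_of_le_of_lt (hsum w) ?_)
    refine ENNReal.add_lt_top.mpr ⟨by norm_num, ?_⟩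
    exact ENNReal.div_lt_top (hQfin w).ne hεne
  · -- bounded expectation on V
    set B : ℝ≥0∞ := ⨆ w ∈ V, ∫⁻ z, ENNReal.ofReal (L z) ∂(K w) with hB
    refine lt_of_le_of_lt (iSup₂_le fun w hw => ?_)
      (show 2 + B / ENNReal.ofReal ε < ⊤ from ?_)
    · refine (hsum w).trans (add_le_add_right ?_ _)
      refine ENNReal.div_le_div_right ((hQint w).trans ?_) _
      exact le_biSup (fun w => ∫⁻ z, ENNReal.ofReal (L z) ∂(K w)) hw
    · refine ENNReal.add_lt_top.mpr ⟨by norm_num, ?_⟩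
      exact ENNReal.div_lt_top hi.ne hεne
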